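/- arXiv:0810.5562 — 2 statements merged into one kernel-verified Lean document; each statement's English description precedes it below -/
import Mathlib

section
/- Let σ assign to the basis quaternions of the real quaternion algebra ℍ the triple degrees σ(1) = (0,0,0), σ(i) = (0,1,1), σ(j) = (1,0,1), σ(k) = (1,1,0) (viewed as vectors in ℤ³). Then for any two homogeneous quaternions p = a•x and q = b•y, where a, b ∈ ℝ and x, y ∈ {1, i, j, k}, the usual quaternion product satisfies the graded commutativity condition p * q = ((-1)^⟨σ(x), σ(y)⟩) • (q * p), where ⟨·,·⟩ denotes the standard scalar product of 3-vectors in ℤ³. -/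
open Quaternion

/-- The canonical basis `1, i, j, k` of the real quaternion algebra. -/
noncomputable def quatBasis : Fin 4 → ℍ[ℝ]
  | 0 => 1
  | 1 => ⟨0, 1, 0, 0⟩
  | 2 => ⟨0, 0, 1, 0⟩
  | 3 => ⟨0, 0, 0, 1⟩

/-- The triple degree `σ(1) = (0,0,0)`, `σ(i) = (0,1,1)`, `σ(j) = (1,0,1)`,
`σ(k) = (1,1,0)`, viewed as vectors in `ℤ³`. -/
def tripleDeg : Fin 4 → Fin 3 → ℤ
  | 0 => ![0, 0, 0]
  | 1 => ![0, 1, 1]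
  | 2 => ![1, 0, 1]
  | 3 => ![1, 1, 0]

theorem quatBasis_re (m : Fin 4) : (quatBasis m).re = ![1, 0, 0, 0] m := by
  fin_cases m <;> rfl
theorem quatBasis_imI (m : Fin 4) : (quatBasis m).imI = ![0, 1, 0, 0] m := by
  fin_cases m <;> rfl
theorem quatBasis_imJ (m : Fin 4) : (quatBasis m).imJ = ![0, 0, 1, 0] m := by
  fin_cases m <;> rfl
theorem quatBasis_imK (m : Fin 4) : (quatBasis m).imK = ![0, 0, 0, 1] m := by
  fin_cases m <;> rfl

/-- For any two homogeneous quaternions `p = a • x`, `q = b • y` with `x, y` basis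
quaternions, one has `p * q = (-1)^⟨σ(x),σ(y)⟩ • (q * p)`. -/
theorem quaternion_graded_commutativity (a b : ℝ) (m n : Fin 4) :
    (a • quatBasis m) * (b • quatBasis n) =
      ((-1 : ℝ) ^ (∑ t : Fin 3, tripleDeg m t * tripleDeg n t)) •
        ((b • quatBasis n) * (a • quatBasis m)) := by
  fin_cases m <;> fin_cases n <;>
    simp only [tripleDeg, Fin.sum_univ_three] <;> norm_num <;>
    ext <;>
    simp [QuaternionAlgebra.ext_iff, QuaternionAlgebra.re_mul, QuaternionAlgebra.imI_mul,
      QuaternionAlgebra.imJ_mul, QuaternionAlgebra.imK_mul, quatBasis_re, quatBasis_imI,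
      quatBasis_imJ, quatBasis_imK] <;> ring
end

section
/- Let R be a ring, let Γ be an additive abelian group, and let b : Γ → Γ → ℤ/2ℤ be additive in each argument. Let e₁, e₂, e₄ ∈ R and set e₃ = e₁ * e₂. Suppose e₄ anticommutes with e₁, e₂ and e₃ (that is, e₄ * eₗ = -(eₗ * e₄) for ℓ = 1, 2, 3), and suppose 2•(e₁ * e₄) ≠ 0, 2•(e₂ * e₄) ≠ 0 and 2•(e₃ * e₄) ≠ 0. Then there exist no degrees γ₁, γ₂, γ₃, γ₄ ∈ Γ with γ₃ = γ₁ + γ₂ such that the graded commutativity relation eₘ * eₙ = (-1)^{b(γₘ, γₙ)} • (eₙ * eₘ) holds for all m, n ∈ {1, 2, 3, 4} (where (-1)^c means 1 if c = 0 and -1 if c = 1 in ℤ/2ℤ). In particular, the algebra of octonions, which contains such elements e₁, e₂, e₃, e₄ among its imaginary units, cannot be realized as a graded commutative algebra over any abelian group. -/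
/-- Let `R` be a ring, `Γ` an abelian group and `b : Γ → Γ → ℤ/2ℤ` biadditive.
If `e₁, e₂, e₄ ∈ R`, `e₃ = e₁ * e₂`, `e₄` anticommutes with `e₁, e₂, e₃`, and
`2 • (eₗ * e₄) ≠ 0` for `ℓ = 1, 2, 3`, then there are no degrees
`γ₁, γ₂, γ₃, γ₄ ∈ Γ` with `γ₃ = γ₁ + γ₂` satisfying the graded commutativity
relation `eₘ * eₙ = (-1)^{b(γₘ,γₙ)} • (eₙ * eₘ)` for all `m, n`.
In particular, the octonions cannot be realized as a graded commutative algebra. -/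
theorem no_graded_commutative_structure {R : Type*} [Ring R] {Γ : Type*} [AddCommGroup Γ]
    (b : Γ → Γ → ZMod 2)
    (hbl : ∀ x y z : Γ, b (x + y) z = b x z + b y z)
    (hbr : ∀ x y z : Γ, b x (y + z) = b x y + b x z)
    (e₁ e₂ e₃ e₄ : R) (he₃ : e₃ = e₁ * e₂)
    (h14 : e₄ * e₁ = -(e₁ * e₄)) (h24 : e₄ * e₂ = -(e₂ * e₄)) (h34 : e₄ * e₃ = -(e₃ * e₄))
    (hne1 : (2 : ℤ) • (e₁ * e₄) ≠ 0) (hne2 : (2 : ℤ) • (e₂ * e₄) ≠ 0)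
    (hne3 : (2 : ℤ) • (e₃ * e₄) ≠ 0) :
    ¬ ∃ γ : Fin 4 → Γ, γ 2 = γ 0 + γ 1 ∧
      ∀ m n : Fin 4,
        ![e₁, e₂, e₃, e₄] m * ![e₁, e₂, e₃, e₄] n =
          (if b (γ m) (γ n) = 0 then (1 : ℤ) else -1) •
            (![e₁, e₂, e₃, e₄] n * ![e₁, e₂, e₃, e₄] m) := by
  rintro ⟨γ, hγ, h⟩
  have two : ∀ x : ZMod 2, x = 0 ∨ x = 1 := by decide
  have key : ∀ (ℓ : Fin 4) (eℓ : R), ![e₁, e₂, e₃, e₄] ℓ = eℓ →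
      e₄ * eℓ = -(eℓ * e₄) → (2 : ℤ) • (eℓ * e₄) ≠ 0 → b (γ 3) (γ ℓ) = 1 := by
    intro ℓ eℓ hℓ hanti hne
    rcases two (b (γ 3) (γ ℓ)) with hb | hb
    · exfalso
      have h3 := h 3 ℓ
      rw [show ![e₁, e₂, e₃, e₄] 3 = e₄ from rfl, hℓ, hb, if_pos rfl, one_smul, hanti] at h3
      apply hne
      have : eℓ * e₄ + eℓ * e₄ = 0 := add_eq_zero_iff_eq_neg.mpr h3.symm
      rw [two_smul]; exact this
    · exact hb
  have k1 := key 0 e₁ rfl h14 hne1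
  have k2 := key 1 e₂ rfl h24 hne2
  have k3 := key 2 e₃ rfl h34 hne3
  rw [hγ, hbr, k1, k2] at k3
  exact absurd k3 (by decide)
end
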